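/- For any symplectic matrix H ∈ ℝ^{2d×2d}, there exist symmetric matrices S, T, U ∈ ℝ^{d×d} and an invertible P ∈ ℝ^{d×d} such that H = [[I,S],[0,I]] · [[I,0],[T,I]] · [[I,U],[0,I]] · [[P,0],[0,P^{-T}]]. -/

import Mathlib

open Matrix

def Jmat (d : ℕ) : Matrix (Fin d ⊕ Fin d) (Fin d ⊕ Fin d) ℝ :=
  Matrix.fromBlocks 0 1 (-1) 0

def IsSymplectic {d : ℕ} (H : Matrix (Fin d ⊕ Fin d) (Fin d ⊕ Fin d) ℝ) : Prop :=
  Hᵀ * Jmat d * H = Jmat d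

lemma symp_blocks {d : ℕ} {A B C D : Matrix (Fin d) (Fin d) ℝ}
    (h : IsSymplectic (Matrix.fromBlocks A B C D)) :
    Aᵀ*C = Cᵀ*A ∧ Aᵀ*D - Cᵀ*B = 1 ∧ Bᵀ*D = Dᵀ*B := by
  unfold IsSymplectic Jmat at h
  rw [fromBlocks_transpose, fromBlocks_multiply, fromBlocks_multiply] at h
  simp only [Matrix.mul_zero, Matrix.mul_one, Matrix.mul_neg, zero_add, add_zero,
    Matrix.zero_mul, Matrix.one_mul, Matrix.neg_mul] at h
  rw [fromBlocks_inj] at h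
  obtain ⟨h11, h12, h22, h21⟩ := h
  refine ⟨?_, ?_, ?_⟩
  · rw [neg_add_eq_zero] at h11; exact h11.symm
  · rw [neg_add_eq_iff_eq_add] at h12; rw [h12]; abel
  · rw [neg_add_eq_zero] at h21; exact h21.symm

lemma Jmat_mul_Jmat (d : ℕ) : Jmat d * Jmat d = -1 := by
  unfold Jmat
  rw [fromBlocks_multiply]
  simp only [Matrix.mul_zero, Matrix.mul_one, Matrix.mul_neg, Matrix.zero_mul, Matrix.one_mul,
    zero_add, add_zero, Matrix.neg_mul, neg_zero]
  rw [← Matrix.fromBlocks_one, Matrix.fromBlocks_neg]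
  simp

lemma isUnit_Jmat (d : ℕ) : IsUnit (Jmat d) := by
  rw [Matrix.isUnit_iff_isUnit_det]
  have : (Jmat d).det * (-(Jmat d)).det = 1 := by
    rw [← Matrix.det_mul, Matrix.mul_neg, Jmat_mul_Jmat, neg_neg, Matrix.det_one]
  exact IsUnit.of_mul_eq_one _ this

lemma symp_isUnit {d : ℕ} {H : Matrix (Fin d ⊕ Fin d) (Fin d ⊕ Fin d) ℝ}
    (h : IsSymplectic H) : IsUnit H := by
  have hd : IsUnit (Jmat d).det := (Matrix.isUnit_iff_isUnit_det _).1 (isUnit_Jmat d)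
  rw [Matrix.isUnit_iff_isUnit_det]
  have h2 : (H.det * H.det) * (Jmat d).det = 1 * (Jmat d).det := by
    have := congrArg Matrix.det h
    rw [Matrix.det_mul, Matrix.det_mul, Matrix.det_transpose] at this
    linear_combination this
  have h3 : H.det * H.det = 1 := mul_right_cancel₀ hd.ne_zero h2
  exact IsUnit.of_mul_eq_one _ h3

lemma symp_transpose {d : ℕ} {H : Matrix (Fin d ⊕ Fin d) (Fin d ⊕ Fin d) ℝ}
    (h : IsSymplectic H) : IsSymplectic Hᵀ := by
  unfold IsSymplectic at h ⊢
  rw [Matrix.transpose_transpose]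
  have e1 : Hᵀ * (Jmat d * (H * (-(Jmat d)))) = 1 := by
    have := congrArg (· * (-(Jmat d))) h
    simp only [Matrix.mul_assoc] at this
    rw [this, Matrix.mul_neg, Jmat_mul_Jmat, neg_neg]
  have e2 : (Jmat d * (H * (-(Jmat d)))) * Hᵀ = 1 := mul_eq_one_comm.mp e1
  have e3 := congrArg (fun M => (-(Jmat d)) * M) e2
  simp only [Matrix.mul_assoc] at e3
  rw [Matrix.mul_one] at e3
  rw [show (-(Jmat d)) * (Jmat d * (H * ((-(Jmat d)) * Hᵀ))) = ((-(Jmat d)) * Jmat d) * (H * ((-(Jmat d)) * Hᵀ)) from by simp only [Matrix.mul_assoc]] at e3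
  rw [Matrix.neg_mul, Jmat_mul_Jmat, neg_neg, Matrix.one_mul] at e3
  rw [Matrix.neg_mul, Matrix.mul_neg] at e3
  rw [Matrix.mul_assoc]
  exact neg_injective e3

open Polynomial in
lemma exists_t {d : ℕ} {A C : Matrix (Fin d) (Fin d) ℝ} (h1 : Aᵀ*C = Cᵀ*A)
    (hinj : ∀ x : Fin d → ℝ, A *ᵥ x = 0 → C *ᵥ x = 0 → x = 0) :
    ∃ t : ℝ, IsUnit (A + t • C) := by
  -- G := AᵀA + CᵀC is invertible
  set G : Matrix (Fin d) (Fin d) ℝ := Aᵀ*A + Cᵀ*C with hG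
  have hGunit : IsUnit G := by
    rw [← Matrix.mulVec_injective_iff_isUnit]
    have hker : ∀ x, G *ᵥ x = 0 → x = 0 := by
      intro x hx
      have h0 : x ⬝ᵥ (G *ᵥ x) = 0 := by rw [hx, dotProduct_zero]
      have nn : ∀ v : Fin d → ℝ, 0 ≤ v ⬝ᵥ v := fun v =>
        Finset.sum_nonneg fun i _ => mul_self_nonneg _
      have hsplit : x ⬝ᵥ (G *ᵥ x) = (A *ᵥ x) ⬝ᵥ (A *ᵥ x) + (C *ᵥ x) ⬝ᵥ (C *ᵥ x) := by
        simp [hG, Matrix.add_mulVec, dotProduct_add, ← Matrix.mulVec_mulVec,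
          Matrix.dotProduct_mulVec, Matrix.vecMul_transpose]
      rw [hsplit] at h0
      have hA0 : (A *ᵥ x) ⬝ᵥ (A *ᵥ x) = 0 := by linarith [nn (A *ᵥ x), nn (C *ᵥ x)]
      have hC0 : (C *ᵥ x) ⬝ᵥ (C *ᵥ x) = 0 := by linarith [nn (A *ᵥ x), nn (C *ᵥ x)]
      exact hinj x (dotProduct_self_eq_zero.mp hA0) (dotProduct_self_eq_zero.mp hC0)
    intro x y hxy
    have : G *ᵥ (x - y) = 0 := by rw [Matrix.mulVec_sub, hxy, sub_self]
    have := hker _ this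
    exact sub_eq_zero.mp this
  -- move to ℂ
  set f : ℝ →+* ℂ := Complex.ofRealHom with hf
  have hmapT : ∀ (M : Matrix (Fin d) (Fin d) ℝ), (M.map f)ᴴ = Mᵀ.map f := by
    intro M; ext i j
    simp [Matrix.conjTranspose_apply, Matrix.map_apply, hf, Complex.conj_ofReal]
  set M : Matrix (Fin d) (Fin d) ℂ := A.map f + Complex.I • C.map f with hM
  have key : Mᴴ * M = G.map f := by
    have hAC : (Aᵀ*C).map f = (Cᵀ*A).map f := by rw [h1]
    rw [hM, Matrix.conjTranspose_add, Matrix.conjTranspose_smul, hmapT, hmapT]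
    rw [Matrix.add_mul, Matrix.mul_add, Matrix.mul_add, Matrix.smul_mul, Matrix.smul_mul,
      Matrix.mul_smul, Matrix.mul_smul, smul_smul]
    rw [← Matrix.map_mul, ← Matrix.map_mul, ← Matrix.map_mul, ← Matrix.map_mul, hAC]
    rw [hG, Matrix.map_add]
    simp only [Complex.star_def, Complex.conj_I]
    have h3 : (-Complex.I * Complex.I : ℂ) = 1 := by
      rw [neg_mul, Complex.I_mul_I, neg_neg]
    rw [h3, one_smul]
    · module
    · exact fun a₁ a₂ => map_add f a₁ a₂
  have hGdet : G.det ≠ 0 := ((Matrix.isUnit_iff_isUnit_det _).1 hGunit).ne_zero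
  have hMdet : M.det ≠ 0 := by
    intro h0
    have : (Mᴴ * M).det = 0 := by rw [Matrix.det_mul, h0, mul_zero]
    rw [key] at this
    have h4 := f.map_det G
    rw [RingHom.mapMatrix_apply] at h4
    rw [← h4] at this
    simp [hf] at this
    exact hGdet this
  -- polynomial in z
  set Mp : Matrix (Fin d) (Fin d) (Polynomial ℂ) :=
    (A.map f).map Polynomial.C + (Polynomial.X : Polynomial ℂ) • (C.map f).map Polynomial.C
    with hMp
  have heval : ∀ z : ℂ, Mp.map (Polynomial.evalRingHom z) = A.map f + z • C.map f := by
    intro z; ext i j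
    simp only [hMp, Matrix.map_apply, Matrix.add_apply, Matrix.smul_apply, smul_eq_mul,
      Polynomial.eval_add, Polynomial.eval_mul, Polynomial.eval_C, Polynomial.eval_X,
      Polynomial.coe_evalRingHom]
  have hdet : ∀ z : ℂ, Polynomial.eval z Mp.det = (A.map f + z • C.map f).det := by
    intro z
    have := (Polynomial.evalRingHom z).map_det Mp
    rw [RingHom.mapMatrix_apply, heval z] at this
    exact this
  have hp0 : Mp.det ≠ 0 := by
    intro h0
    apply hMdet
    have := hdet Complex.I
    rw [h0] at this
    simpa [hM] using this.symm
  have hfin := Polynomial.finite_setOf_isRoot hp0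
  have hinf : Set.Infinite (Set.range (fun t : ℝ => (t:ℂ))) :=
    Set.infinite_range_of_injective Complex.ofReal_injective
  obtain ⟨z, hz⟩ := (hinf.diff hfin).nonempty
  obtain ⟨⟨t, rfl⟩, hznot⟩ := hz
  refine ⟨t, ?_⟩
  rw [Matrix.isUnit_iff_isUnit_det, isUnit_iff_ne_zero]
  intro h0
  apply hznot
  show Polynomial.IsRoot _ _
  have hmapsmul : (A + t • C).map f = A.map f + (t:ℂ) • C.map f := by
    ext i j; simp [Matrix.map_apply, hf]
  have h5 := f.map_det (A + t • C)
  rw [RingHom.mapMatrix_apply] at h5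
  rw [Polynomial.IsRoot, hdet, ← hmapsmul, ← h5, h0, map_zero]

theorem stmt9 (d : ℕ) (H : Matrix (Fin d ⊕ Fin d) (Fin d ⊕ Fin d) ℝ)
    (h : IsSymplectic H) :
    ∃ S T U P : Matrix (Fin d) (Fin d) ℝ,
      Sᵀ = S ∧ Tᵀ = T ∧ Uᵀ = U ∧ IsUnit P ∧
      H = Matrix.fromBlocks 1 S 0 1 * Matrix.fromBlocks 1 0 T 1 *
          Matrix.fromBlocks 1 U 0 1 * Matrix.fromBlocks P 0 0 P⁻¹ᵀ := by
  set A := H.toBlocks₁₁ with hA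
  set B := H.toBlocks₁₂ with hB
  set C := H.toBlocks₂₁ with hC
  set D := H.toBlocks₂₂ with hD
  have hH : H = Matrix.fromBlocks A B C D := (Matrix.fromBlocks_toBlocks H).symm
  obtain ⟨e1, e2, e4⟩ := symp_blocks (hH ▸ h)
  have hHT : Hᵀ = Matrix.fromBlocks Aᵀ Cᵀ Bᵀ Dᵀ := by rw [hH, Matrix.fromBlocks_transpose]
  obtain ⟨f1', f2', f4'⟩ := symp_blocks (hHT ▸ symp_transpose h)
  rw [Matrix.transpose_transpose] at f1' f2' f4'
  have f1 : A * Bᵀ = B * Aᵀ := f1'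
  have f2 : A * Dᵀ - B * Cᵀ = 1 := f2'
  have f4 : C * Dᵀ = D * Cᵀ := f4'
  -- joint injectivity
  have e2t : Dᵀ * A - Bᵀ * C = 1 := by
    have := congrArg Matrix.transpose e2
    simpa [Matrix.transpose_sub, Matrix.transpose_mul] using this
  have hinj : ∀ x : Fin d → ℝ, A *ᵥ x = 0 → C *ᵥ x = 0 → x = 0 := by
    intro x hAx hCx
    have : (Dᵀ * A - Bᵀ * C) *ᵥ x = x := by rw [e2t, Matrix.one_mulVec]
    rw [Matrix.sub_mulVec, ← Matrix.mulVec_mulVec, ← Matrix.mulVec_mulVec, hAx, hCx] at this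
    simpa using this.symm
  obtain ⟨t, hP⟩ := exists_t e1 hinj
  set P : Matrix (Fin d) (Fin d) ℝ := A + t • C with hPdef
  have hPdet : IsUnit P.det := (Matrix.isUnit_iff_isUnit_det _).1 hP
  have hPPinv : P * P⁻¹ = 1 := Matrix.mul_nonsing_inv _ hPdet
  have hPinvP : P⁻¹ * P = 1 := Matrix.nonsing_inv_mul _ hPdet
  have hPT1 : Pᵀ * P⁻¹ᵀ = 1 := by rw [← Matrix.transpose_mul, hPinvP, Matrix.transpose_one]
  have hPT2 : P⁻¹ᵀ * Pᵀ = 1 := by rw [← Matrix.transpose_mul, hPPinv, Matrix.transpose_one]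
  set S : Matrix (Fin d) (Fin d) ℝ := (-t) • 1 with hSdef
  set T : Matrix (Fin d) (Fin d) ℝ := C * P⁻¹ with hTdef
  set U : Matrix (Fin d) (Fin d) ℝ := (B + t • D) * Pᵀ with hUdef
  -- symmetry of T
  have hPTC : Pᵀ * C = Cᵀ * P := by
    rw [hPdef, Matrix.transpose_add, Matrix.transpose_smul, Matrix.add_mul, Matrix.mul_add,
      Matrix.smul_mul, Matrix.mul_smul, e1]
  have hTsym : Tᵀ = T := by
    rw [hTdef, Matrix.transpose_mul]
    calc P⁻¹ᵀ * Cᵀ = P⁻¹ᵀ * Cᵀ * (P * P⁻¹) := by rw [hPPinv, Matrix.mul_one]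
      _ = P⁻¹ᵀ * (Cᵀ * P) * P⁻¹ := by simp only [Matrix.mul_assoc]
      _ = P⁻¹ᵀ * (Pᵀ * C) * P⁻¹ := by rw [hPTC]
      _ = (P⁻¹ᵀ * Pᵀ) * (C * P⁻¹) := by simp only [Matrix.mul_assoc]
      _ = C * P⁻¹ := by rw [hPT2, Matrix.one_mul]
  -- symmetry of U
  have hmid1 : A * Dᵀ = 1 + B * Cᵀ := by rw [← f2]; abel
  have f2t : D * Aᵀ - C * Bᵀ = 1 := by
    have := congrArg Matrix.transpose f2
    simpa [Matrix.transpose_sub, Matrix.transpose_mul] using this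
  have hmid2 : D * Aᵀ = 1 + C * Bᵀ := by rw [← f2t]; abel
  have hUsym : Uᵀ = U := by
    rw [hUdef, Matrix.transpose_mul, Matrix.transpose_transpose, Matrix.transpose_add,
      Matrix.transpose_smul, hPdef, Matrix.transpose_add, Matrix.transpose_smul]
    rw [Matrix.add_mul, Matrix.mul_add, Matrix.mul_add, Matrix.smul_mul, Matrix.smul_mul,
      Matrix.mul_smul, Matrix.mul_smul, Matrix.mul_add, Matrix.add_mul, Matrix.add_mul,
      Matrix.mul_smul, Matrix.smul_mul, Matrix.smul_mul, Matrix.mul_smul]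
    rw [f1, f4, hmid1, hmid2]
    simp only [smul_add, smul_smul]
    abel
  -- key identities
  have hTP : T * P = C := by rw [hTdef, Matrix.mul_assoc, hPinvP, Matrix.mul_one]
  have hCB : Cᵀ * (B + t • D) = Pᵀ * D - 1 := by
    have e2' : Cᵀ * B = Aᵀ * D - 1 := by rw [← e2]; abel
    rw [Matrix.mul_add, e2', hPdef, Matrix.transpose_add, Matrix.transpose_smul,
      Matrix.add_mul, Matrix.mul_smul, Matrix.smul_mul]
    abel
  have hTU : T * U = D * Pᵀ - 1 := by
    have : T * U = P⁻¹ᵀ * (Cᵀ * (B + t • D)) * Pᵀ := by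
      rw [← hTsym, hTdef, Matrix.transpose_mul]
      simp only [Matrix.mul_assoc, hUdef]
    rw [this, hCB, Matrix.mul_sub, Matrix.mul_one, Matrix.sub_mul]
    rw [show P⁻¹ᵀ * (Pᵀ * D) * Pᵀ = (P⁻¹ᵀ * Pᵀ) * (D * Pᵀ) from by simp only [Matrix.mul_assoc],
      hPT2, Matrix.one_mul]
  have g22 : (T * U + 1) * P⁻¹ᵀ = D := by
    rw [hTU]
    rw [show D * Pᵀ - 1 + 1 = D * Pᵀ from by abel]
    rw [Matrix.mul_assoc, hPT1, Matrix.mul_one]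
  have g11 : (1 + S * T) * P = A := by
    rw [Matrix.add_mul, Matrix.one_mul, Matrix.mul_assoc, hTP, hSdef, Matrix.smul_mul,
      Matrix.one_mul, hPdef]
    module
  have g12 : ((1 + S * T) * U + S) * P⁻¹ᵀ = B := by
    have hU1 : U * P⁻¹ᵀ = B + t • D := by
      rw [hUdef, Matrix.mul_assoc, hPT1, Matrix.mul_one]
    rw [show ((1 + S * T) * U + S) * P⁻¹ᵀ = U * P⁻¹ᵀ + S * ((T * U + 1) * P⁻¹ᵀ) from by
      simp only [Matrix.add_mul, Matrix.mul_add, Matrix.one_mul, Matrix.mul_assoc]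
      abel]
    rw [hU1, g22, hSdef, Matrix.smul_mul, Matrix.one_mul]
    module
  refine ⟨S, T, U, P, by rw [hSdef]; simp, hTsym, hUsym, hP, ?_⟩
  rw [hH]
  rw [Matrix.fromBlocks_multiply, Matrix.fromBlocks_multiply, Matrix.fromBlocks_multiply]
  simp only [Matrix.mul_one, Matrix.one_mul, Matrix.mul_zero, Matrix.zero_mul, add_zero, zero_add]
  rw [Matrix.fromBlocks_inj]
  refine ⟨?_, ?_, ?_, ?_⟩
  · rw [g11]
  · rw [g12]
  · rw [hTP]
  · rw [g22]
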